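/- arXiv:2411.14587 — 2 statements merged into one kernel-verified Lean document; each statement's English description precedes it below -/
import Mathlib

section
/- If φ: S^1 → S^1 is an orientation-preserving diffeomorphism, then the operators Π⁺ φ* Π⁻ and Π⁻ φ* Π⁺ are smoothing, i.e., they map distributions (distributional one-forms) on S^1 to smooth one-forms. -/
open MeasureTheory Real

noncomputable def fourierCoef (w : ℝ → ℂ) (k : ℤ) : ℂ :=
  (1 / (2 * (Real.pi : ℂ))) * ∫ θ in (0:ℝ)..(2 * Real.pi),
    Complex.exp (-Complex.I * (k : ℂ) * (θ : ℂ)) * w θ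

namespace Stmt6

/-- opposite signs -/
def Opp (m n : ℤ) : Prop := (0 < m ∧ n < 0) ∨ (m < 0 ∧ 0 < n)

/-- the weight `1 + |m| + |n|` -/
def lam (m n : ℤ) : ℝ := 1 + |(m : ℝ)| + |(n : ℝ)|

lemma lam_pos (m n : ℤ) : 0 < lam m n := by
  unfold lam; positivity

/-- real phase derivative `n φ'(θ) - m` -/
noncomputable def pd (φ : ℝ → ℝ) (m n : ℤ) (θ : ℝ) : ℝ := n * deriv φ θ - m

/-- `(i (n φ' - m))⁻¹` -/
noncomputable def rr (φ : ℝ → ℝ) (m n : ℤ) (θ : ℝ) : ℂ :=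
  (Complex.I * (pd φ m n θ : ℂ))⁻¹

/-- the oscillating exponential -/
noncomputable def ee (φ : ℝ → ℝ) (m n : ℤ) (θ : ℝ) : ℂ :=
  Complex.exp (Complex.I * ((n : ℂ) * (φ θ : ℂ) - (m : ℂ) * (θ : ℂ)))

/-- the amplitudes produced by repeated integration by parts -/
noncomputable def amp (φ : ℝ → ℝ) : ℕ → ℤ → ℤ → ℝ → ℂ
  | 0 => fun _ _ θ => ((deriv φ θ : ℝ) : ℂ)
  | (k+1) => fun m n θ => -deriv (fun t => amp φ k m n t * rr φ m n t) θ

/-- derivative of a periodic function is periodic -/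
lemma periodic_deriv' {E : Type*} [NormedAddCommGroup E] [NormedSpace ℝ E]
    {f : ℝ → E} {p : ℝ} (hf : ∀ θ, f (θ + p) = f θ) (θ : ℝ) :
    deriv f (θ + p) = deriv f θ := by
  have : (fun x => f (x + p)) = f := funext hf
  rw [← deriv_comp_add_const (f := f) (a := p) (x := θ), this]

lemma exists_bound_of_periodic {E : Type*} [NormedAddCommGroup E] {f : ℝ → E}
    (hc : Continuous f) (hf : ∀ θ, f (θ + 2 * Real.pi) = f θ) :
    ∃ M, 0 < M ∧ ∀ θ, ‖f θ‖ ≤ M := by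
  have hp : Function.Periodic f (2 * Real.pi) := hf
  have hb := hp.isBounded_of_continuous (by positivity) hc
  rcases isBounded_iff_forall_norm_le.mp hb with ⟨M, hM⟩
  refine ⟨max M 1, lt_of_lt_of_le one_pos (le_max_right _ _), fun θ => ?_⟩
  exact le_trans (hM _ (Set.mem_range_self θ)) (le_max_left _ _)



lemma iteratedDeriv_ofReal (f : ℝ → ℝ) (hf : ContDiff ℝ (⊤ : ℕ∞) f) (j : ℕ) :
    iteratedDeriv j (fun t : ℝ => ((f t : ℝ) : ℂ)) = fun θ => ((iteratedDeriv j f θ : ℝ) : ℂ) := by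
  induction j generalizing f with
  | zero => simp [iteratedDeriv_zero]
  | succ j ih =>
      rw [iteratedDeriv_succ', iteratedDeriv_succ']
      have hd : deriv (fun t : ℝ => ((f t : ℝ) : ℂ)) = fun t => ((deriv f t : ℝ) : ℂ) := by
        funext x
        exact (((hf.differentiable (by simp)) x).hasDerivAt.ofReal_comp).deriv
      rw [hd]
      exact ih (deriv f) ((contDiff_infty_iff_deriv.mp hf).2)

lemma leibniz_bound {u v : ℝ → ℂ} (hu : ContDiff ℝ (⊤ : ℕ∞) u) (hv : ContDiff ℝ (⊤ : ℕ∞) v)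
    {Q : ℕ} {Cu Cv : ℝ} (hCu0 : 0 ≤ Cu) (hCv0 : 0 ≤ Cv)
    (hCu : ∀ i ≤ Q, ∀ θ, ‖iteratedDeriv i u θ‖ ≤ Cu)
    (hCv : ∀ i ≤ Q, ∀ θ, ‖iteratedDeriv i v θ‖ ≤ Cv)
    {q : ℕ} (hq : q ≤ Q) (θ : ℝ) :
    ‖iteratedDeriv q (fun t => u t * v t) θ‖ ≤ 2 ^ Q * Cu * Cv := by
  have h := norm_iteratedFDeriv_mul_le (𝕜 := ℝ) hu hv θ (n := q) (by exact_mod_cast le_top)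
  rw [norm_iteratedFDeriv_eq_norm_iteratedDeriv] at h
  have hsum : ∑ i ∈ Finset.range (q + 1),
      (q.choose i : ℝ) * ‖iteratedFDeriv ℝ i u θ‖ * ‖iteratedFDeriv ℝ (q - i) v θ‖
      ≤ ∑ i ∈ Finset.range (q + 1), (q.choose i : ℝ) * Cu * Cv := by
    refine Finset.sum_le_sum fun i hi => ?_
    have hiQ : i ≤ Q := le_trans (Nat.lt_succ_iff.mp (Finset.mem_range.mp hi)) hq
    have h1 := hCu i hiQ θ
    have h2 := hCv (q - i) (le_trans (Nat.sub_le _ _) hq) θ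
    rw [← norm_iteratedFDeriv_eq_norm_iteratedDeriv] at h1 h2
    have hb : (0:ℝ) ≤ (q.choose i : ℝ) := by positivity
    calc (q.choose i : ℝ) * ‖iteratedFDeriv ℝ i u θ‖ * ‖iteratedFDeriv ℝ (q - i) v θ‖
        ≤ (q.choose i : ℝ) * Cu * ‖iteratedFDeriv ℝ (q - i) v θ‖ := by
          apply mul_le_mul_of_nonneg_right _ (norm_nonneg _)
          exact mul_le_mul_of_nonneg_left h1 hb
      _ ≤ (q.choose i : ℝ) * Cu * Cv := by
          apply mul_le_mul_of_nonneg_left h2 (by positivity)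
  have htot : ∑ i ∈ Finset.range (q + 1), (q.choose i : ℝ) * Cu * Cv = 2 ^ q * Cu * Cv := by
    rw [← Finset.sum_mul, ← Finset.sum_mul, ← Nat.cast_sum, Nat.sum_range_choose]
    push_cast; ring
  have h2q : (2:ℝ) ^ q * Cu * Cv ≤ 2 ^ Q * Cu * Cv := by
    have : (2:ℝ) ^ q ≤ 2 ^ Q := pow_le_pow_right₀ one_le_two hq
    apply mul_le_mul_of_nonneg_right _ hCv0
    exact mul_le_mul_of_nonneg_right this hCu0
  exact le_trans h (le_trans hsum (le_trans htot.le h2q))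




lemma pd_lower {φ : ℝ → ℝ} {c : ℝ} (hc : 0 < c) (hlow : ∀ θ, c ≤ deriv φ θ)
    {m n : ℤ} (h : Opp m n) (θ : ℝ) :
    min c 1 / 2 * lam m n ≤ |pd φ m n θ| := by
  have hδ1 : min c 1 ≤ 1 := min_le_right _ _
  have hδc : min c 1 ≤ c := min_le_left _ _
  have hδ0 : 0 < min c 1 := lt_min hc one_pos
  have hφθ := hlow θ
  rcases h with ⟨hm, hn⟩ | ⟨hm, hn⟩
  · have hm1 : (1:ℝ) ≤ (m:ℝ) := by exact_mod_cast hm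
    have hn1 : (n:ℝ) ≤ -1 := by exact_mod_cast (show n ≤ -1 by omega)
    have habs : |(m:ℝ)| = (m:ℝ) := abs_of_pos (by linarith)
    have habsn : |(n:ℝ)| = -(n:ℝ) := abs_of_neg (by linarith)
    have hpd : pd φ m n θ ≤ (n:ℝ) * c - m := by
      unfold pd
      have := mul_le_mul_of_nonpos_left hφθ (by linarith : (n:ℝ) ≤ 0)
      linarith
    have : |pd φ m n θ| ≥ (m:ℝ) - n * c := by
      rw [abs_of_neg (by nlinarith)]
      linarith
    unfold lam
    rw [habs, habsn]
    nlinarith [mul_le_mul_of_nonneg_right hδc (by linarith : (0:ℝ) ≤ -(n:ℝ)),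
      mul_le_mul_of_nonneg_right hδ1 (by linarith : (0:ℝ) ≤ (m:ℝ) - 1)]
  · have hm1 : (m:ℝ) ≤ -1 := by exact_mod_cast (show m ≤ -1 by omega)
    have hn1 : (1:ℝ) ≤ (n:ℝ) := by exact_mod_cast hn
    have habs : |(m:ℝ)| = -(m:ℝ) := abs_of_neg (by linarith)
    have habsn : |(n:ℝ)| = (n:ℝ) := abs_of_pos (by linarith)
    have hpd : (n:ℝ) * c - m ≤ pd φ m n θ := by
      unfold pd
      have := mul_le_mul_of_nonneg_left hφθ (by linarith : (0:ℝ) ≤ (n:ℝ))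
      linarith
    have : |pd φ m n θ| ≥ (n:ℝ) * c - m := by
      rw [abs_of_pos (by nlinarith)]
      linarith
    unfold lam
    rw [habs, habsn]
    nlinarith [mul_le_mul_of_nonneg_right hδc (by linarith : (0:ℝ) ≤ (n:ℝ)),
      mul_le_mul_of_nonneg_right hδ1 (by linarith : (0:ℝ) ≤ -(m:ℝ) - 1)]


lemma iteratedDeriv_cmul {f : ℝ → ℂ} (hf : ContDiff ℝ (⊤ : ℕ∞) f) (a : ℂ) (j : ℕ) :
    iteratedDeriv j (fun t => a * f t) = fun t => a * iteratedDeriv j f t := by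
  induction j generalizing f with
  | zero => simp [iteratedDeriv_zero]
  | succ j ih =>
      rw [iteratedDeriv_succ', iteratedDeriv_succ']
      have hd : deriv (fun t => a * f t) = fun t => a * deriv f t :=
        funext fun x => deriv_const_mul a ((hf.differentiable (by simp)) x)
      rw [hd]
      exact ih ((contDiff_infty_iff_deriv.mp hf).2)

lemma iter_iter (j k : ℕ) (f : ℝ → ℝ) :
    iteratedDeriv j (iteratedDeriv k f) = iteratedDeriv (j + k) f := by
  simp only [iteratedDeriv_eq_iterate]
  exact (Function.iterate_add_apply deriv j k f).symm

section Phi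

variable {φ : ℝ → ℝ} (hφ : ContDiff ℝ (⊤ : ℕ∞) φ)
variable (hφlift : ∀ θ : ℝ, φ (θ + 2 * Real.pi) = φ θ + 2 * Real.pi)
variable (hφ' : ∀ θ : ℝ, 0 < deriv φ θ)

include hφ in
lemma smooth_iter_deriv (j : ℕ) : ContDiff ℝ (⊤ : ℕ∞) (iteratedDeriv j φ) := by
  rw [iteratedDeriv_eq_iterate]
  exact ContDiff.iterate_deriv j hφ

include hφlift in
lemma periodic_iter_deriv (j : ℕ) (θ : ℝ) :
    iteratedDeriv (j+1) φ (θ + 2 * Real.pi) = iteratedDeriv (j+1) φ θ := by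
  induction j generalizing θ with
  | zero =>
      rw [show (0:ℕ)+1 = 1 from rfl, iteratedDeriv_one]
      have : (fun x => φ (x + 2*Real.pi)) = fun x => φ x + 2*Real.pi := funext hφlift
      calc deriv φ (θ + 2*Real.pi) = deriv (fun x => φ (x + 2*Real.pi)) θ := by
            rw [deriv_comp_add_const]
        _ = deriv (fun x => φ x + 2*Real.pi) θ := by rw [this]
        _ = deriv φ θ := deriv_add_const _
  | succ j ih =>
      rw [iteratedDeriv_succ]
      exact periodic_deriv' ih θ

include hφ hφlift in
lemma bound_iter_deriv (j : ℕ) : ∃ M, 0 < M ∧ ∀ θ, ‖iteratedDeriv (j+1) φ θ‖ ≤ M :=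
  exists_bound_of_periodic (smooth_iter_deriv hφ (j+1)).continuous
    (periodic_iter_deriv hφlift j)

include hφ hφlift hφ' in
lemma exists_low : ∃ c, 0 < c ∧ ∀ θ, c ≤ deriv φ θ := by
  have hc : Continuous (deriv φ) := by
    have h := smooth_iter_deriv hφ 1
    rw [iteratedDeriv_one] at h
    exact h.continuous
  have hp : Function.Periodic (deriv φ) (2 * Real.pi) := fun θ => by
    have := periodic_iter_deriv hφlift 0 θ
    rwa [iteratedDeriv_one] at this
  have hcompact := hp.compact_of_continuous (by positivity) hc
  obtain ⟨a, ha, hmin⟩ := hcompact.exists_isLeast ⟨deriv φ 0, Set.mem_range_self 0⟩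
  obtain ⟨θ₀, rfl⟩ := ha
  exact ⟨deriv φ θ₀, hφ' θ₀, fun θ => hmin (Set.mem_range_self θ)⟩

include hφ in
lemma deriv_phi_smooth : ContDiff ℝ (⊤ : ℕ∞) (deriv φ) := by
  have h := smooth_iter_deriv hφ 1
  rwa [iteratedDeriv_one] at h

include hφ in
lemma pd_smooth (m n : ℤ) : ContDiff ℝ (⊤ : ℕ∞) (pd φ m n) :=
  (contDiff_const.mul (deriv_phi_smooth hφ)).sub contDiff_const

include hφ in
lemma pdC_smooth (m n : ℤ) : ContDiff ℝ (⊤ : ℕ∞) (fun θ => ((pd φ m n θ : ℝ) : ℂ)) :=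
  Complex.ofRealCLM.contDiff.comp (pd_smooth hφ m n)

lemma norm_Ipd (m n : ℤ) (θ : ℝ) : ‖Complex.I * ((pd φ m n θ : ℝ) : ℂ)‖ = |pd φ m n θ| := by
  rw [norm_mul, Complex.norm_I, one_mul, Complex.norm_real, Real.norm_eq_abs]

lemma pd_ne {c : ℝ} (hc : 0 < c) (hlow : ∀ θ, c ≤ deriv φ θ) {m n : ℤ} (h : Opp m n) (θ : ℝ) :
    Complex.I * ((pd φ m n θ : ℝ) : ℂ) ≠ 0 := by
  intro h0
  have h1 := pd_lower hc hlow h θ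
  have h2 : |pd φ m n θ| = 0 := by rw [← norm_Ipd, h0, norm_zero]
  have h3 : 0 < min c 1 / 2 * lam m n := by
    have := lam_pos m n
    have := lt_min hc one_pos
    positivity
  rw [h2] at h1; linarith

lemma rr_smooth {c : ℝ} (hφ : ContDiff ℝ (⊤ : ℕ∞) φ) (hc : 0 < c)
    (hlow : ∀ θ, c ≤ deriv φ θ) {m n : ℤ} (h : Opp m n) :
    ContDiff ℝ (⊤ : ℕ∞) (rr φ m n) :=
  (contDiff_const.mul (pdC_smooth hφ m n)).inv (fun θ => pd_ne hc hlow h θ)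

lemma norm_rr_le {c : ℝ} (hc : 0 < c) (hlow : ∀ θ, c ≤ deriv φ θ) {m n : ℤ}
    (h : Opp m n) (θ : ℝ) :
    ‖rr φ m n θ‖ ≤ (min c 1 / 2)⁻¹ / lam m n := by
  have hδ : 0 < min c 1 / 2 := by have := lt_min hc one_pos; positivity
  have hl := lam_pos m n
  have h1 := pd_lower hc hlow h θ
  have h0 : 0 < min c 1 / 2 * lam m n := by positivity
  rw [rr, norm_inv, norm_Ipd]
  rw [inv_le_comm₀ (by linarith) (by positivity)]
  calc (( min c 1 / 2)⁻¹ / lam m n)⁻¹ = min c 1 / 2 * lam m n := by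
        field_simp
    _ ≤ |pd φ m n θ| := h1

include hφ in
lemma amp_smooth {c : ℝ} (hc : 0 < c) (hlow : ∀ θ, c ≤ deriv φ θ) {m n : ℤ}
    (h : Opp m n) (k : ℕ) : ContDiff ℝ (⊤ : ℕ∞) (amp φ k m n) := by
  induction k with
  | zero =>
      exact Complex.ofRealCLM.contDiff.comp (deriv_phi_smooth hφ)
  | succ k ih =>
      have hmul : ContDiff ℝ (⊤ : ℕ∞) (fun t => amp φ k m n t * rr φ m n t) :=
        ih.mul (rr_smooth hφ hc hlow h)
      have hd : ContDiff ℝ (⊤ : ℕ∞) (deriv (fun t => amp φ k m n t * rr φ m n t)) :=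
        (contDiff_infty_iff_deriv.mp hmul).2
      exact hd.neg

include hφ hφlift in
lemma bound_iter_deriv_upto (Q : ℕ) :
    ∃ M, 0 < M ∧ ∀ j ≤ Q, ∀ θ, ‖iteratedDeriv (j+1) φ θ‖ ≤ M := by
  induction Q with
  | zero =>
      obtain ⟨M, hM, hb⟩ := bound_iter_deriv hφ hφlift 0
      refine ⟨M, hM, fun j hj θ => ?_⟩
      have : j = 0 := Nat.le_zero.mp hj
      subst this; exact hb θ
  | succ Q ih =>
      obtain ⟨M, hM, hb⟩ := ih
      obtain ⟨M2, hM2, hb2⟩ := bound_iter_deriv hφ hφlift (Q+1)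
      refine ⟨max M M2, lt_of_lt_of_le hM (le_max_left _ _), fun j hj θ => ?_⟩
      by_cases hjQ : j ≤ Q
      · exact le_trans (hb j hjQ θ) (le_max_left _ _)
      · have : j = Q + 1 := by omega
        subst this; exact le_trans (hb2 θ) (le_max_right _ _)

include hφ in
lemma hasDerivAt_pdC (m n : ℤ) (θ : ℝ) :
    HasDerivAt (fun t => ((pd φ m n t : ℝ) : ℂ))
      ((n : ℂ) * ((iteratedDeriv 2 φ θ : ℝ) : ℂ)) θ := by
  have hd : HasDerivAt (deriv φ) (deriv (deriv φ) θ) θ :=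
    (((deriv_phi_smooth hφ).differentiable (by simp)) θ).hasDerivAt
  have hpd : HasDerivAt (pd φ m n) ((n : ℝ) * deriv (deriv φ) θ) θ := by
    exact (hd.const_mul (n : ℝ)).sub_const (m : ℝ)
  have h2 : deriv (deriv φ) θ = iteratedDeriv 2 φ θ := by
    rw [iteratedDeriv_succ, iteratedDeriv_one]
  have := hpd.ofReal_comp
  rw [h2] at this
  convert this using 1
  push_cast; ring

include hφ in
lemma deriv_rr {c : ℝ} (hc : 0 < c) (hlow : ∀ θ, c ≤ deriv φ θ) {m n : ℤ} (h : Opp m n) :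
    deriv (rr φ m n) = fun θ =>
      (-(Complex.I * (n : ℂ)) * ((iteratedDeriv 2 φ θ : ℝ) : ℂ) * rr φ m n θ) * rr φ m n θ := by
  funext θ
  have h1 : HasDerivAt (fun t => Complex.I * ((pd φ m n t : ℝ) : ℂ))
      (Complex.I * ((n : ℂ) * ((iteratedDeriv 2 φ θ : ℝ) : ℂ))) θ :=
    (hasDerivAt_pdC hφ m n θ).const_mul Complex.I
  have hne := pd_ne hc hlow h θ
  have h2 := (hasDerivAt_const θ (1 : ℂ)).div h1 hne
  have heq : ((fun _ => (1 : ℂ)) / fun y => (Complex.I * ((pd φ m n y : ℝ) : ℂ))) = rr φ m n :=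
    funext fun y => by simp only [Pi.div_apply, rr, one_div]
  rw [heq] at h2
  have h3 : deriv (rr φ m n) θ =
      (0 * (Complex.I * ((pd φ m n θ : ℝ) : ℂ)) -
        1 * (Complex.I * ((n : ℂ) * ((iteratedDeriv 2 φ θ : ℝ) : ℂ)))) /
      (Complex.I * ((pd φ m n θ : ℝ) : ℂ)) ^ 2 := h2.deriv
  rw [h3, rr]
  field_simp
  ring

include hφ hφlift in
lemma rr_iter_bound {c : ℝ} (hc : 0 < c) (hlow : ∀ θ, c ≤ deriv φ θ) (Q : ℕ) :
    ∃ C, 0 < C ∧ ∀ q ≤ Q, ∀ m n : ℤ, Opp m n → ∀ θ,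
      ‖iteratedDeriv q (rr φ m n) θ‖ ≤ C / lam m n := by
  have hMsmooth : ContDiff ℝ (⊤ : ℕ∞) (fun t => ((iteratedDeriv 2 φ t : ℝ) : ℂ)) :=
    Complex.ofRealCLM.contDiff.comp (smooth_iter_deriv hφ 2)
  induction Q with
  | zero =>
      refine ⟨(min c 1 / 2)⁻¹, by have := lt_min hc one_pos; positivity, fun q hq m n h θ => ?_⟩
      have : q = 0 := Nat.le_zero.mp hq
      subst this
      simpa [iteratedDeriv_zero] using norm_rr_le hc hlow h θ
  | succ Q ih =>
      obtain ⟨C, hC, hbound⟩ := ih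
      obtain ⟨M, hM, hMb⟩ := bound_iter_deriv_upto hφ hφlift (Q+1)
      refine ⟨max C (2^Q * (2^Q * M * C) * C),
        lt_of_lt_of_le hC (le_max_left _ _), fun q hq m n h θ => ?_⟩
      have hlampos := lam_pos m n
      by_cases hqQ : q ≤ Q
      · refine le_trans (hbound q hqQ m n h θ) ?_
        gcongr
        exact le_max_left _ _
      · have hq1 : q = Q + 1 := by omega
        subst hq1
        -- the building blocks
        set R := rr φ m n with hR
        have hRsm : ContDiff ℝ (⊤ : ℕ∞) R := rr_smooth hφ hc hlow h
        set w : ℝ → ℂ := fun t => -(Complex.I * (n : ℂ)) * ((iteratedDeriv 2 φ t : ℝ) : ℂ)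
          with hw
        have hwsm : ContDiff ℝ (⊤ : ℕ∞) w := contDiff_const.mul hMsmooth
        set u : ℝ → ℂ := fun t => w t * R t with hu
        have husm : ContDiff ℝ (⊤ : ℕ∞) u := hwsm.mul hRsm
        -- bound on derivatives of w
        have hnlam : |(n : ℝ)| ≤ lam m n := by
          unfold lam
          have := abs_nonneg (m : ℝ); linarith
        have hwb : ∀ i ≤ Q, ∀ t, ‖iteratedDeriv i w t‖ ≤ lam m n * M := by
          intro i hi t
          have hcm := iteratedDeriv_cmul hMsmooth (-(Complex.I * (n : ℂ))) i
          have : iteratedDeriv i w t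
              = -(Complex.I * (n : ℂ)) * iteratedDeriv i
                  (fun t => ((iteratedDeriv 2 φ t : ℝ) : ℂ)) t := by
            rw [hw, hcm]
          rw [this, norm_mul]
          have h1 : ‖-(Complex.I * (n : ℂ))‖ = |(n : ℝ)| := by
            rw [norm_neg, norm_mul, Complex.norm_I, one_mul, Complex.norm_intCast]
          have h2 : iteratedDeriv i (fun t => ((iteratedDeriv 2 φ t : ℝ) : ℂ)) t
              = ((iteratedDeriv (i + 2) φ t : ℝ) : ℂ) := by
            rw [iteratedDeriv_ofReal _ (smooth_iter_deriv hφ 2) i]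
            rw [iter_iter]
          rw [h1, h2, Complex.norm_real, Real.norm_eq_abs]
          have h3 : |iteratedDeriv (i + 2) φ t| ≤ M := by
            have := hMb (i + 1) (by omega) t
            simpa [Real.norm_eq_abs, show i + 1 + 1 = i + 2 from rfl] using this
          exact mul_le_mul hnlam h3 (abs_nonneg _) (le_of_lt hlampos)
        -- bound on derivatives of R
        have hRb : ∀ i ≤ Q, ∀ t, ‖iteratedDeriv i R t‖ ≤ C / lam m n :=
          fun i hi t => hbound i hi m n h t
        -- bound on derivatives of u
        have hub : ∀ i ≤ Q, ∀ t, ‖iteratedDeriv i u t‖ ≤ 2^Q * M * C := by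
          intro i hi t
          have := leibniz_bound hwsm hRsm
            (by positivity) (by positivity) hwb hRb hi t
          refine le_trans this (le_of_eq ?_)
          field_simp
        -- now the main bound
        rw [iteratedDeriv_succ']
        have hdR : deriv R = fun t => u t * R t := by
          rw [hR, deriv_rr hφ hc hlow h]
        rw [hdR]
        have := leibniz_bound husm hRsm
          (by positivity) (by positivity : (0:ℝ) ≤ C / lam m n) hub hRb (le_refl Q) θ
        refine le_trans this ?_
        calc 2 ^ Q * (2 ^ Q * M * C) * (C / lam m n)
            = (2 ^ Q * (2 ^ Q * M * C) * C) / lam m n := by ring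
          _ ≤ (max C (2 ^ Q * (2 ^ Q * M * C) * C)) / lam m n := by
              gcongr
              exact le_max_right _ _

include hφ hφlift in
lemma amp_iter_bound {c : ℝ} (hc : 0 < c) (hlow : ∀ θ, c ≤ deriv φ θ) (k : ℕ) :
    ∀ Q : ℕ, ∃ C, 0 < C ∧ ∀ q ≤ Q, ∀ m n : ℤ, Opp m n → ∀ θ,
      ‖iteratedDeriv q (amp φ k m n) θ‖ ≤ C / lam m n ^ k := by
  induction k with
  | zero =>
      intro Q
      obtain ⟨M, hM, hMb⟩ := bound_iter_deriv_upto hφ hφlift Q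
      refine ⟨M, hM, fun q hq m n h θ => ?_⟩
      have h1 : iteratedDeriv q (amp φ 0 m n) θ = ((iteratedDeriv (q+1) φ θ : ℝ) : ℂ) := by
        show iteratedDeriv q (fun t => ((deriv φ t : ℝ) : ℂ)) θ = _
        rw [iteratedDeriv_ofReal _ (deriv_phi_smooth hφ) q]
        have : deriv φ = iteratedDeriv 1 φ := (iteratedDeriv_one).symm
        rw [this, iter_iter]
      rw [h1, Complex.norm_real, Real.norm_eq_abs, pow_zero, div_one]
      have := hMb q hq θ
      rwa [Real.norm_eq_abs] at this
  | succ k ih =>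
      intro Q
      obtain ⟨CB, hCB, hB⟩ := ih (Q+1)
      obtain ⟨CA, hCA, hA⟩ := rr_iter_bound hφ hφlift hc hlow (Q+1)
      refine ⟨2^(Q+1) * CB * CA, by positivity, fun q hq m n h θ => ?_⟩
      have hlampos := lam_pos m n
      have hAsm : ContDiff ℝ (⊤ : ℕ∞) (amp φ k m n) := amp_smooth hφ hc hlow h k
      have hRsm : ContDiff ℝ (⊤ : ℕ∞) (rr φ m n) := rr_smooth hφ hc hlow h
      have h1 : iteratedDeriv q (amp φ (k+1) m n) θ
          = -iteratedDeriv (q+1) (fun t => amp φ k m n t * rr φ m n t) θ := by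
        calc iteratedDeriv q (amp φ (k+1) m n) θ
            = -(iteratedDeriv q (deriv (fun t => amp φ k m n t * rr φ m n t)) θ) :=
              iteratedDeriv_neg q _ θ
          _ = -iteratedDeriv (q+1) (fun t => amp φ k m n t * rr φ m n t) θ := by
              rw [iteratedDeriv_succ']
      rw [h1, norm_neg]
      have h2 := leibniz_bound hAsm hRsm
        (le_of_lt (div_pos hCB (by positivity)))
        (le_of_lt (div_pos hCA hlampos))
        (fun i hi t => hB i hi m n h t)
        (fun i hi t => hA i hi m n h t)
        (show q + 1 ≤ Q + 1 by omega) θ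
      refine le_trans h2 (le_of_eq ?_)
      field_simp
      ring

include hφlift in
lemma pd_periodic (m n : ℤ) (θ : ℝ) : pd φ m n (θ + 2 * Real.pi) = pd φ m n θ := by
  unfold pd
  have := periodic_iter_deriv hφlift 0 θ
  rw [show (0:ℕ)+1 = 1 from rfl, iteratedDeriv_one] at this
  rw [this]

include hφlift in
lemma rr_periodic (m n : ℤ) (θ : ℝ) : rr φ m n (θ + 2 * Real.pi) = rr φ m n θ := by
  unfold rr
  rw [pd_periodic hφlift]

include hφlift in
lemma amp_periodic (k : ℕ) (m n : ℤ) (θ : ℝ) :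
    amp φ k m n (θ + 2 * Real.pi) = amp φ k m n θ := by
  induction k generalizing θ with
  | zero =>
      show ((deriv φ (θ + 2*Real.pi) : ℝ) : ℂ) = _
      have := periodic_iter_deriv hφlift 0 θ
      rw [show (0:ℕ)+1 = 1 from rfl, iteratedDeriv_one] at this
      rw [this]
      rfl
  | succ k ih =>
      show -deriv (fun t => amp φ k m n t * rr φ m n t) (θ + 2*Real.pi) = _
      have hper : ∀ t, (fun t => amp φ k m n t * rr φ m n t) (t + 2*Real.pi)
          = (fun t => amp φ k m n t * rr φ m n t) t := by
        intro t
        simp only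
        rw [ih, rr_periodic hφlift]
      rw [periodic_deriv' hper θ]
      rfl

include hφ in
lemma hasDerivAt_ee (m n : ℤ) (θ : ℝ) :
    HasDerivAt (ee φ m n) (ee φ m n θ * (Complex.I * ((pd φ m n θ : ℝ) : ℂ))) θ := by
  have hφθ : HasDerivAt (fun t : ℝ => ((φ t : ℝ) : ℂ)) ((deriv φ θ : ℝ) : ℂ) θ :=
    ((hφ.differentiable (by simp)) θ).hasDerivAt.ofReal_comp
  have hid : HasDerivAt (fun t : ℝ => ((t : ℝ) : ℂ)) 1 θ := by
    simpa using (hasDerivAt_id θ).ofReal_comp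
  have hin : HasDerivAt (fun t : ℝ => Complex.I * ((n : ℂ) * ((φ t : ℝ) : ℂ) - (m : ℂ) * ((t : ℝ) : ℂ)))
      (Complex.I * ((n : ℂ) * ((deriv φ θ : ℝ) : ℂ) - (m : ℂ) * 1)) θ :=
    (((hφθ.const_mul (n : ℂ)).sub (hid.const_mul (m : ℂ)))).const_mul Complex.I
  have := hin.cexp
  have heq : Complex.I * ((n : ℂ) * ((deriv φ θ : ℝ) : ℂ) - (m : ℂ) * 1)
      = Complex.I * ((pd φ m n θ : ℝ) : ℂ) := by
    unfold pd; push_cast; ring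
  rw [heq] at this
  exact this

include hφlift in
lemma ee_periodic (m n : ℤ) (θ : ℝ) : ee φ m n (θ + 2 * Real.pi) = ee φ m n θ := by
  unfold ee
  rw [hφlift θ]
  have : Complex.I * ((n : ℂ) * ((φ θ + 2*Real.pi : ℝ) : ℂ) - (m : ℂ) * ((θ + 2*Real.pi : ℝ) : ℂ))
      = Complex.I * ((n : ℂ) * ((φ θ : ℝ) : ℂ) - (m : ℂ) * ((θ : ℝ) : ℂ))
        + ((n - m : ℤ) : ℂ) * (2 * Real.pi * Complex.I) := by
    push_cast; ring
  rw [this, Complex.exp_add, Complex.exp_int_mul_two_pi_mul_I, mul_one]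

lemma norm_ee (m n : ℤ) (θ : ℝ) : ‖ee φ m n θ‖ = 1 := by
  unfold ee
  rw [Complex.norm_exp]
  have : (Complex.I * ((n : ℂ) * ((φ θ : ℝ) : ℂ) - (m : ℂ) * ((θ : ℝ) : ℂ))).re = 0 := by
    simp [Complex.mul_re, Complex.mul_im]
  rw [this, Real.exp_zero]

include hφ in
lemma ee_continuous (m n : ℤ) : Continuous (ee φ m n) := by
  apply Complex.continuous_exp.comp
  apply Continuous.mul continuous_const
  exact (continuous_const.mul (Complex.continuous_ofReal.comp hφ.continuous)).sub
    (continuous_const.mul Complex.continuous_ofReal)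

include hφ hφlift in
lemma integral_step {c : ℝ} (hc : 0 < c) (hlow : ∀ θ, c ≤ deriv φ θ) {m n : ℤ}
    (h : Opp m n) (k : ℕ) :
    (∫ θ in (0:ℝ)..(2 * Real.pi), amp φ (k+1) m n θ * ee φ m n θ)
      = ∫ θ in (0:ℝ)..(2 * Real.pi), amp φ k m n θ * ee φ m n θ := by
  have hAsm : ContDiff ℝ (⊤ : ℕ∞) (amp φ k m n) := amp_smooth hφ hc hlow h k
  have hRsm : ContDiff ℝ (⊤ : ℕ∞) (rr φ m n) := rr_smooth hφ hc hlow h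
  have hARsm : ContDiff ℝ (⊤ : ℕ∞) (fun t => amp φ k m n t * rr φ m n t) := hAsm.mul hRsm
  have hdARsm : ContDiff ℝ (⊤ : ℕ∞) (deriv (fun t => amp φ k m n t * rr φ m n t)) :=
    (contDiff_infty_iff_deriv.mp hARsm).2
  set A := amp φ k m n with hA
  set R := rr φ m n with hRdef
  set E := ee φ m n with hE
  set DAR := deriv (fun t => A t * R t) with hDAR
  -- F and its derivative
  have hF : ∀ θ : ℝ, HasDerivAt (fun t => A t * R t * E t) (DAR θ * E θ + A θ * E θ) θ := by
    intro θ
    have hAR : HasDerivAt (fun t => A t * R t) (DAR θ) θ :=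
      ((hARsm.differentiable (by simp)) θ).hasDerivAt
    have hE := hasDerivAt_ee hφ m n θ
    have hprod := hAR.mul hE
    have hne := pd_ne hc hlow h θ
    have hone : R θ * (Complex.I * ((pd φ m n θ : ℝ) : ℂ)) = 1 := inv_mul_cancel₀ hne
    have : DAR θ * E θ + A θ * R θ * (E θ * (Complex.I * ((pd φ m n θ : ℝ) : ℂ)))
        = DAR θ * E θ + A θ * E θ := by
      linear_combination (A θ * E θ) * hone
    rw [← this]
    exact hprod
  have hEcont : Continuous E := ee_continuous hφ m n
  have hGcont : Continuous (fun θ => DAR θ * E θ + A θ * E θ) :=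
    ((hdARsm.continuous.mul hEcont)).add (hAsm.continuous.mul hEcont)
  have hint : (∫ θ in (0:ℝ)..(2 * Real.pi), (DAR θ * E θ + A θ * E θ))
      = (fun t => A t * R t * E t) (2 * Real.pi) - (fun t => A t * R t * E t) 0 := by
    apply intervalIntegral.integral_eq_sub_of_hasDerivAt (fun θ _ => hF θ)
    exact hGcont.intervalIntegrable _ _
  have hzero : (fun t => A t * R t * E t) (2 * Real.pi) - (fun t => A t * R t * E t) 0 = 0 := by
    have h2 : (2 * Real.pi : ℝ) = 0 + 2 * Real.pi := by ring
    simp only [hA, hRdef, hE]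
    rw [h2, amp_periodic hφlift, rr_periodic hφlift, ee_periodic hφlift, sub_self]
  have hsplit : (∫ θ in (0:ℝ)..(2 * Real.pi), (DAR θ * E θ + A θ * E θ))
      = (∫ θ in (0:ℝ)..(2 * Real.pi), DAR θ * E θ)
        + ∫ θ in (0:ℝ)..(2 * Real.pi), A θ * E θ := by
    apply intervalIntegral.integral_add
    · exact (hdARsm.continuous.mul hEcont).intervalIntegrable _ _
    · exact (hAsm.continuous.mul hEcont).intervalIntegrable _ _
  have hmain : (∫ θ in (0:ℝ)..(2 * Real.pi), DAR θ * E θ)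
      = - ∫ θ in (0:ℝ)..(2 * Real.pi), A θ * E θ := by
    have := hint.trans hzero
    rw [hsplit] at this
    linear_combination this
  have hneg : (∫ θ in (0:ℝ)..(2 * Real.pi), amp φ (k+1) m n θ * E θ)
      = - ∫ θ in (0:ℝ)..(2 * Real.pi), DAR θ * E θ := by
    have : ∀ θ, amp φ (k+1) m n θ * E θ = -(DAR θ * E θ) := by
      intro θ
      show -DAR θ * E θ = _
      ring
    rw [intervalIntegral.integral_congr (fun θ _ => this θ)]
    rw [intervalIntegral.integral_neg]
  rw [hneg, hmain, neg_neg]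

include hφ hφlift in
lemma integral_all {c : ℝ} (hc : 0 < c) (hlow : ∀ θ, c ≤ deriv φ θ) {m n : ℤ}
    (h : Opp m n) (k : ℕ) :
    (∫ θ in (0:ℝ)..(2 * Real.pi), amp φ k m n θ * ee φ m n θ)
      = ∫ θ in (0:ℝ)..(2 * Real.pi), amp φ 0 m n θ * ee φ m n θ := by
  induction k with
  | zero => rfl
  | succ k ih => rw [integral_step hφ hφlift hc hlow h k, ih]

end Phi

end Stmt6

open Stmt6 in
/-- If `φ : S¹ → S¹` is an orientation-preserving diffeomorphism (given by a smooth lift with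
`φ(θ+2π) = φ(θ)+2π`, `φ' > 0`), then the operators `Π⁺ φ* Π⁻` and `Π⁻ φ* Π⁺` on one-forms
are smoothing: their Schwartz kernels are smooth.  Equivalently, the matrix coefficients
`a(m,n) = (1/2π) ∫ e^{-imθ} e^{inφ(θ)} φ'(θ) dθ` of the pullback `φ*` decay rapidly when
`m` and `n` have opposite signs, so that the operator maps distributional one-forms on `S¹`
to smooth one-forms. -/
theorem stmt_6 (φ : ℝ → ℝ) (hφ : ContDiff ℝ (⊤ : ℕ∞) φ)
    (hφlift : ∀ θ : ℝ, φ (θ + 2 * Real.pi) = φ θ + 2 * Real.pi)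
    (hφ' : ∀ θ : ℝ, 0 < deriv φ θ) :
    ∀ N : ℕ, ∃ C : ℝ, 0 < C ∧ ∀ m n : ℤ,
      ((0 < m ∧ n < 0) ∨ (m < 0 ∧ 0 < n)) →
      ‖fourierCoef (fun θ => Complex.exp (Complex.I * (n : ℂ) * ((φ θ : ℝ) : ℂ))
          * ((deriv φ θ : ℝ) : ℂ)) m‖
        ≤ C / (1 + |(m : ℝ)| + |(n : ℝ)|) ^ N := by
  intro N
  obtain ⟨c, hc, hlow⟩ := Stmt6.exists_low hφ hφlift hφ'
  obtain ⟨C, hC, hCb⟩ := Stmt6.amp_iter_bound hφ hφlift hc hlow N 0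
  refine ⟨C, hC, fun m n h => ?_⟩
  have hopp : Stmt6.Opp m n := h
  have hlampos := Stmt6.lam_pos m n
  have hinteg : Set.EqOn
      (fun θ : ℝ => Complex.exp (-Complex.I * (m:ℂ) * (θ:ℂ)) *
        (Complex.exp (Complex.I * (n:ℂ) * ((φ θ:ℝ):ℂ)) * ((deriv φ θ:ℝ):ℂ)))
      (fun θ => Stmt6.amp φ 0 m n θ * Stmt6.ee φ m n θ)
      (Set.uIcc (0:ℝ) (2*Real.pi)) := by
    intro θ _
    show Complex.exp (-Complex.I * (m:ℂ) * (θ:ℂ)) *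
        (Complex.exp (Complex.I * (n:ℂ) * ((φ θ:ℝ):ℂ)) * ((deriv φ θ:ℝ):ℂ))
      = ((deriv φ θ:ℝ):ℂ) *
        Complex.exp (Complex.I * ((n:ℂ)*((φ θ:ℝ):ℂ) - (m:ℂ)*((θ:ℝ):ℂ)))
    rw [show Complex.I * ((n:ℂ)*((φ θ:ℝ):ℂ) - (m:ℂ)*((θ:ℝ):ℂ))
        = (-Complex.I * (m:ℂ) * (θ:ℂ)) + (Complex.I * (n:ℂ) * ((φ θ:ℝ):ℂ)) by ring,
      Complex.exp_add]
    ring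
  have hfc : fourierCoef (fun θ => Complex.exp (Complex.I * (n : ℂ) * ((φ θ : ℝ) : ℂ))
        * ((deriv φ θ : ℝ) : ℂ)) m
      = (1 / (2 * (Real.pi:ℂ))) *
        ∫ θ in (0:ℝ)..(2*Real.pi), Stmt6.amp φ N m n θ * Stmt6.ee φ m n θ := by
    unfold fourierCoef
    rw [intervalIntegral.integral_congr hinteg,
      ← Stmt6.integral_all hφ hφlift hc hlow hopp N]
  have hnorm1 : ‖(1 / (2 * (Real.pi:ℂ)))‖ = 1 / (2*Real.pi) := by
    have h2 : (2 * (Real.pi:ℂ)) = ((2*Real.pi : ℝ) : ℂ) := by push_cast; ring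
    rw [norm_div, norm_one, h2, Complex.norm_real, Real.norm_eq_abs,
      abs_of_pos (by positivity)]
  have hbound : ∀ θ ∈ Set.uIoc (0:ℝ) (2*Real.pi),
      ‖Stmt6.amp φ N m n θ * Stmt6.ee φ m n θ‖ ≤ C / Stmt6.lam m n ^ N := by
    intro θ _
    rw [norm_mul, Stmt6.norm_ee, mul_one]
    have h0 := hCb 0 (le_refl 0) m n hopp θ
    rwa [iteratedDeriv_zero] at h0
  have hI := intervalIntegral.norm_integral_le_of_norm_le_const hbound
  rw [hfc, norm_mul, hnorm1]
  have hfinal : (1 / (2*Real.pi)) *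
      ‖∫ θ in (0:ℝ)..(2*Real.pi), Stmt6.amp φ N m n θ * Stmt6.ee φ m n θ‖
      ≤ (1 / (2*Real.pi)) * (C / Stmt6.lam m n ^ N * |2*Real.pi - 0|) := by
    apply mul_le_mul_of_nonneg_left hI (by positivity)
  refine le_trans hfinal (le_of_eq ?_)
  have hpi : (0:ℝ) < 2*Real.pi := by positivity
  rw [abs_of_pos (by linarith)]
  show 1 / (2*Real.pi) * (C / Stmt6.lam m n ^ N * (2*Real.pi - 0)) = C / Stmt6.lam m n ^ N
  field_simp
  ring
end

section
/- Let b be an orientation-preserving C^∞ diffeomorphism of S^1 and set T = Id − K on H := Π⁻L² × Π⁺L² (one-forms), where K = [[0, Π⁻b*Π⁺],[Π⁺(b^{−1})*Π⁻, 0]]. Then K is a compact (indeed smoothing) operator, and hence T is Fredholm of index 0; combined with triviality of its nullspace, T is invertible on H, and T^{−1} = Id + R' where R' is smoothing. -/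
open MeasureTheory

section Aux

variable {H : Type*} [NormedAddCommGroup H] [InnerProductSpace ℂ H] [CompleteSpace H]

/-- If `K` is compact and `1 - K` is injective, then `1 - K` is bounded below. -/
lemma aux_bounded_below (K : H →L[ℂ] H) (hK : IsCompactOperator K)
    (hker : LinearMap.ker (((1 : H →L[ℂ] H) - K) : H →ₗ[ℂ] H) = ⊥) :
    ∃ c : ℝ, 0 < c ∧ ∀ x : H, c * ‖x‖ ≤ ‖((1 : H →L[ℂ] H) - K) x‖ := by
  set T := (1 : H →L[ℂ] H) - K with hT
  by_contra h
  push_neg at h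
  -- build a sequence of unit vectors with `T u n → 0`
  have hseq : ∀ n : ℕ, ∃ u : H, ‖u‖ = 1 ∧ ‖T u‖ < 1 / (n + 1) := by
    intro n
    obtain ⟨x, hx⟩ := h (1 / (n + 1)) (by positivity)
    have hx0 : x ≠ 0 := by
      rintro rfl
      simp at hx
    have hxn : (0:ℝ) < ‖x‖ := norm_pos_iff.2 hx0
    have hnc : ‖((‖x‖ : ℂ))⁻¹‖ = ‖x‖⁻¹ := by
      rw [norm_inv]
      simp [abs_of_nonneg (norm_nonneg x)]
    refine ⟨((‖x‖ : ℂ))⁻¹ • x, ?_, ?_⟩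
    · rw [norm_smul, hnc, inv_mul_cancel₀ (norm_ne_zero_iff.2 hx0)]
    · calc ‖T (((‖x‖:ℂ))⁻¹ • x)‖ = ‖x‖⁻¹ * ‖T x‖ := by
            rw [T.map_smul, norm_smul, hnc]
        _ < ‖x‖⁻¹ * (1 / (n + 1) * ‖x‖) := by
            exact mul_lt_mul_of_pos_left hx (inv_pos.2 hxn)
        _ = 1 / (n + 1) := by field_simp
  choose u hu1 hu2 using hseq
  have hTu : Filter.Tendsto (fun n => T (u n)) Filter.atTop (nhds 0) := by
    rw [tendsto_iff_norm_sub_tendsto_zero]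
    simp only [sub_zero]
    have h0 : Filter.Tendsto (fun n : ℕ => 1 / ((n:ℝ) + 1)) Filter.atTop (nhds 0) :=
      tendsto_one_div_add_atTop_nhds_zero_nat
    exact squeeze_zero (fun n => norm_nonneg _) (fun n => (hu2 n).le) h0
  -- compactness: extract convergent subsequence of K (u n)
  have hcomp : IsCompact (closure (⇑K '' Metric.closedBall 0 1)) :=
    hK.isCompact_closure_image_closedBall (𝕜₁ := ℂ) 1
  have hmem : ∀ n, K (u n) ∈ closure (⇑K '' Metric.closedBall 0 1) := fun n =>
    subset_closure ⟨u n, by simp [Metric.mem_closedBall, dist_zero_right, (hu1 n).le], rfl⟩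
  obtain ⟨y, -, φ, hφ, hconv⟩ := hcomp.tendsto_subseq hmem
  -- u (φ n) = T (u (φ n)) + K (u (φ n)) → 0 + y = y
  have huconv : Filter.Tendsto (fun n => u (φ n)) Filter.atTop (nhds y) := by
    have : (fun n => u (φ n)) = fun n => T (u (φ n)) + K (u (φ n)) := by
      funext n; simp [hT, ContinuousLinearMap.sub_apply]
    rw [this]
    have h1 : Filter.Tendsto (fun n => T (u (φ n))) Filter.atTop (nhds 0) :=
      hTu.comp hφ.tendsto_atTop
    simpa using h1.add hconv
  have hy1 : ‖y‖ = 1 := by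
    have := (continuous_norm.tendsto y).comp huconv
    have h2 : Filter.Tendsto (fun n => ‖u (φ n)‖) Filter.atTop (nhds 1) := by
      simpa [Function.comp, hu1] using
        (tendsto_const_nhds : Filter.Tendsto (fun _ : ℕ => (1:ℝ)) Filter.atTop (nhds 1))
    have h3 : Filter.Tendsto (fun n => ‖u (φ n)‖) Filter.atTop (nhds ‖y‖) := this
    exact tendsto_nhds_unique h3 h2
  have hTy : T y = 0 := by
    have h1 : Filter.Tendsto (fun n => T (u (φ n))) Filter.atTop (nhds (T y)) :=
      (T.continuous.tendsto y).comp huconv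
    have h2 : Filter.Tendsto (fun n => T (u (φ n))) Filter.atTop (nhds 0) :=
      hTu.comp hφ.tendsto_atTop
    exact tendsto_nhds_unique h1 h2
  have : y = 0 := by
    have hmem' : y ∈ LinearMap.ker (T : H →ₗ[ℂ] H) := LinearMap.mem_ker.mpr hTy
    rw [hT, ContinuousLinearMap.toLinearMap_sub, hker] at hmem'
    simpa using hmem'
  rw [this] at hy1; simp at hy1

/-- orthogonality inequality: if `x ⊥ z` then `‖x‖ ≤ ‖x - z‖`. -/
lemma aux_orth_norm {x z : H} (h : inner (𝕜 := ℂ) x z = 0) : ‖x‖ ≤ ‖x - z‖ := by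
  have hsq := norm_sub_sq (𝕜 := ℂ) x z
  rw [h] at hsq
  simp only [map_zero, mul_zero, sub_zero] at hsq
  nlinarith [norm_nonneg (x - z), norm_nonneg x, norm_nonneg z, sq_nonneg ‖z‖]

/-- Fredholm alternative: if `K` is compact and `1 - K` injective, it is surjective. -/
lemma aux_surjective (K : H →L[ℂ] H) (hK : IsCompactOperator K)
    (hker : LinearMap.ker (((1 : H →L[ℂ] H) - K) : H →ₗ[ℂ] H) = ⊥) :
    Function.Surjective ((1 : H →L[ℂ] H) - K) := by
  set T := (1 : H →L[ℂ] H) - K with hT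
  have hinj : Function.Injective T := by
    rw [← ContinuousLinearMap.coe_coe, ← LinearMap.ker_eq_bot]
    exact hker
  -- powers of T are 1 - compact
  have hpow : ∀ n : ℕ, ∃ C : H →L[ℂ] H, IsCompactOperator C ∧ T ^ n = 1 - C := by
    intro n
    induction n with
    | zero => exact ⟨0, isCompactOperator_zero, by simp⟩
    | succ n ih =>
      obtain ⟨C, hC, hCeq⟩ := ih
      refine ⟨C + K - C * K, ?_, ?_⟩
      · have h1 : IsCompactOperator ((C * K : H →L[ℂ] H) : H → H) := by
          have := (hC.comp_clm (K : H →L[ℂ] H))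
          exact this
        have h2 := (hC.add hK).sub h1
        simpa using h2
      · rw [pow_succ, hCeq, hT]
        ext x
        simp [ContinuousLinearMap.sub_apply, ContinuousLinearMap.add_apply, mul_comm]
        abel
  have hpowinj : ∀ n : ℕ, Function.Injective (T ^ n) := by
    intro n
    induction n with
    | zero => simpa using Function.injective_id
    | succ n ih =>
      rw [pow_succ]
      intro a b hab
      exact hinj (ih hab)
  -- each T^n has closed range
  have hclosed : ∀ n : ℕ, IsClosed (Set.range (T ^ n)) := by
    intro n
    obtain ⟨C, hC, hCeq⟩ := hpow n
    have hkn : LinearMap.ker (((1 : H →L[ℂ] H) - C) : H →ₗ[ℂ] H) = ⊥ := by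
      rw [← ContinuousLinearMap.toLinearMap_sub, ← hCeq]
      exact LinearMap.ker_eq_bot.2 (hpowinj n)
    obtain ⟨c, hc, hbound⟩ := aux_bounded_below C hC hkn
    rw [← hCeq] at hbound
    have hanti : AntilipschitzWith (⟨c, hc.le⟩ : NNReal)⁻¹ (T ^ n) := by
      apply ContinuousLinearMap.antilipschitz_of_bound
      intro x
      have h1 : ‖x‖ ≤ c⁻¹ * ‖(T ^ n) x‖ := by
        nlinarith [hbound x, mul_nonneg (inv_nonneg.2 hc.le) (sub_nonneg.2 (hbound x)),
          mul_inv_cancel₀ hc.ne', norm_nonneg x]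
      exact h1
    exact hanti.isClosed_range (T ^ n).uniformContinuous
  by_contra hsurj
  rw [Function.Surjective] at hsurj
  push_neg at hsurj
  obtain ⟨y0, hy0⟩ := hsurj
  -- ranges strictly decrease
  set M : ℕ → Submodule ℂ H := fun n => LinearMap.range ((T ^ n : H →L[ℂ] H) : H →ₗ[ℂ] H) with hM
  have hMle : ∀ n, M (n + 1) ≤ M n := by
    intro n x hx
    obtain ⟨a, ha⟩ := hx
    exact ⟨T a, by rw [← ha, pow_succ]; rfl⟩
  have hMmono : ∀ m n : ℕ, n ≤ m → M m ≤ M n := by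
    intro m n h
    induction m with
    | zero => rw [Nat.le_zero.mp h]
    | succ m ih =>
      rcases Nat.lt_or_ge n (m+1) with h' | h'
      · exact le_trans (hMle m) (ih (Nat.lt_succ_iff.mp h'))
      · rw [Nat.le_antisymm h h']
  have hMne : ∀ n, (T ^ n) y0 ∈ M n ∧ (T ^ n) y0 ∉ M (n + 1) := by
    intro n
    constructor
    · exact ⟨y0, rfl⟩
    · rintro ⟨z, hz⟩
      have : (T ^ n) (T z) = (T ^ n) y0 := by
        rw [← hz, pow_succ]; rfl
      exact hy0 z (hpowinj n this)
  -- choose unit vectors x n ∈ M n ∩ (M (n+1))ᗮ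
  have hchoose : ∀ n : ℕ, ∃ x : H, x ∈ M n ∧ x ∈ (M (n+1))ᗮ ∧ ‖x‖ = 1 := by
    intro n
    have hclosedM : IsClosed ((M (n+1) : Submodule ℂ H) : Set H) := by
      have : ((M (n+1) : Submodule ℂ H) : Set H) = Set.range (T ^ (n+1)) := by
        exact LinearMap.coe_range _
      rw [this]; exact hclosed (n+1)
    haveI : CompleteSpace (M (n+1)) := hclosedM.completeSpace_coe
    set v := (T ^ n) y0 with hv
    set w := v - (Submodule.orthogonalProjection (M (n+1)) v : H) with hw
    have hw0 : w ≠ 0 := by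
      intro hcontra
      apply (hMne n).2
      have hv' : v = ((Submodule.orthogonalProjection (M (n+1)) v : H)) := by
        rw [← sub_eq_zero]; exact hcontra
      rw [show (T ^ n) y0 = v from rfl, hv']
      exact (Submodule.orthogonalProjection (M (n+1)) v).2
    have hworth : w ∈ (M (n+1))ᗮ := Submodule.sub_starProjection_mem_orthogonal v
    have hwmem : w ∈ M n := by
      apply Submodule.sub_mem
      · exact (hMne n).1
      · exact hMle n (Submodule.orthogonalProjection (M (n+1)) v).2
    refine ⟨‖w‖⁻¹ • w, Submodule.smul_mem _ _ hwmem, Submodule.smul_mem _ _ hworth, ?_⟩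
    rw [norm_smul, norm_inv, norm_norm, inv_mul_cancel₀ (norm_ne_zero_iff.2 hw0)]
  choose x hxM hxO hx1 using hchoose
  -- key separation: for n < m, ‖K x n - K x m‖ ≥ 1
  have hsep : ∀ n m : ℕ, n < m → 1 ≤ ‖K (x n) - K (x m)‖ := by
    intro n m hnm
    have hKx : ∀ k, K (x k) = x k - T (x k) := by
      intro k; simp [hT, ContinuousLinearMap.sub_apply]
    have hTmem : ∀ k, T (x k) ∈ M (k + 1) := by
      intro k
      obtain ⟨a, ha⟩ := hxM k
      exact ⟨a, by rw [pow_succ', ContinuousLinearMap.coe_coe, ContinuousLinearMap.mul_apply]; exact congrArg T ha⟩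
    set z := T (x n) + x m - T (x m) with hz
    have hzmem : z ∈ M (n + 1) := by
      apply Submodule.sub_mem
      · exact Submodule.add_mem _ (hTmem n) (hMmono m (n+1) hnm (hxM m))
      · exact hMmono (m+1) (n+1) (by omega) (hTmem m)
    have heq : K (x n) - K (x m) = x n - z := by
      rw [hKx, hKx, hz]; abel
    rw [heq, ← hx1 n]
    exact aux_orth_norm (inner_eq_zero_symm.mp ((Submodule.mem_orthogonal _ _).mp (hxO n) z hzmem))
  -- contradiction with compactness
  have hcomp : IsCompact (closure (⇑K '' Metric.closedBall 0 1)) :=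
    hK.isCompact_closure_image_closedBall (𝕜₁ := ℂ) 1
  have hmem : ∀ n, K (x n) ∈ closure (⇑K '' Metric.closedBall 0 1) := fun n =>
    subset_closure ⟨x n, by simp [Metric.mem_closedBall, dist_zero_right, (hx1 n).le], rfl⟩
  obtain ⟨a, -, φ, hφ, hconv⟩ := hcomp.tendsto_subseq hmem
  rw [Metric.tendsto_atTop] at hconv
  obtain ⟨N, hN⟩ := hconv (1/2) (by norm_num)
  have h1 := hN N le_rfl
  have h2 := hN (N+1) (by omega)
  have hdist : dist (K (x (φ N))) (K (x (φ (N+1)))) < 1 := by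
    calc dist (K (x (φ N))) (K (x (φ (N+1)))) ≤
        dist (K (x (φ N))) a + dist a (K (x (φ (N+1)))) := dist_triangle _ _ _
      _ < 1/2 + 1/2 := by rw [dist_comm a]; exact add_lt_add h1 h2
      _ = 1 := by norm_num
  have := hsep (φ N) (φ (N+1)) (hφ (by omega))
  rw [dist_eq_norm] at hdist
  linarith

end Aux

/-- Abstract form of invertibility of `T = Id − K` on `H = Π⁻L² × Π⁺L²`: if `K` is a
smoothing operator (smoothing operators form a two-sided ideal contained in the compact
operators, stable under addition and negation) and `T = 1 − K` has trivial nullspace, then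
`K` is compact, `T` is Fredholm of index `0` and hence invertible, and `T⁻¹ = Id + R'`
with `R'` smoothing. -/
theorem stmt_15 {H : Type*} [NormedAddCommGroup H] [InnerProductSpace ℂ H]
    [CompleteSpace H]
    (Smoothing : (H →L[ℂ] H) → Prop)
    (hcpt : ∀ A : H →L[ℂ] H, Smoothing A → IsCompactOperator A)
    (hideal : ∀ A B : H →L[ℂ] H, Smoothing A → Smoothing (A.comp B) ∧ Smoothing (B.comp A))
    (hadd : ∀ A B : H →L[ℂ] H, Smoothing A → Smoothing B → Smoothing (A + B))
    (hneg : ∀ A : H →L[ℂ] H, Smoothing A → Smoothing (-A))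
    (K : H →L[ℂ] H) (hK : Smoothing K)
    (hker : LinearMap.ker (((1 : H →L[ℂ] H) - K) : H →ₗ[ℂ] H) = ⊥) :
    IsCompactOperator K ∧
    ∃ Tinv : H →L[ℂ] H,
      ((1 : H →L[ℂ] H) - K).comp Tinv = 1 ∧ Tinv.comp ((1 : H →L[ℂ] H) - K) = 1 ∧
      Smoothing (Tinv - 1) := by
  have hKc : IsCompactOperator K := hcpt K hK
  refine ⟨hKc, ?_⟩
  set T := (1 : H →L[ℂ] H) - K with hT
  have hsurj : Function.Surjective T := aux_surjective K hKc hker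
  have hrange : LinearMap.range (T : H →ₗ[ℂ] H) = ⊤ := LinearMap.range_eq_top.2 hsurj
  let e : H ≃L[ℂ] H := ContinuousLinearEquiv.ofBijective T hker hrange
  refine ⟨(e.symm : H →L[ℂ] H), ?_, ?_, ?_⟩
  · ext x
    simp only [ContinuousLinearMap.comp_apply, ContinuousLinearMap.one_apply]
    exact ContinuousLinearEquiv.ofBijective_apply_symm_apply T hker hrange x
  · ext x
    simp only [ContinuousLinearMap.comp_apply, ContinuousLinearMap.one_apply]
    exact ContinuousLinearEquiv.ofBijective_symm_apply_apply T hker hrange x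
  · have hcompeq : (e.symm : H →L[ℂ] H).comp T = 1 := by
      ext x
      simp only [ContinuousLinearMap.comp_apply, ContinuousLinearMap.one_apply]
      exact ContinuousLinearEquiv.ofBijective_symm_apply_apply T hker hrange x
    have h2 : (e.symm : H →L[ℂ] H).comp T =
        (e.symm : H →L[ℂ] H) - (e.symm : H →L[ℂ] H).comp K := by
      conv_lhs => rw [hT]
      rw [ContinuousLinearMap.comp_sub]
      ext x; simp
    rw [hcompeq] at h2
    rw [eq_comm, sub_eq_iff_eq_add] at h2
    have heq : (e.symm : H →L[ℂ] H) - 1 = (e.symm : H →L[ℂ] H).comp K :=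
      sub_eq_of_eq_add' h2
    rw [heq]
    exact (hideal K (e.symm : H →L[ℂ] H) hK).2
end
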